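/- Let G and G' be groups, Q a nonempty set, and f : G → G' a surjective group homomorphism. Let μ : G × Q → [0,1] be an α-Q-fuzzy subgroup of G, and define the image f(μ) : G' × Q → [0,1] by f(μ)(x', q) = sup{ μ(x, q) : x ∈ G, f(x) = x' } (supremum in the complete lattice [0,1]). Then f(μ) is an α-Q-fuzzy subgroup of G'. -/

import Mathlib

/-- `μ` is an α-Q-fuzzy subgroup of the group `G`. -/
def IsAlphaQFuzzySubgroup {G Q : Type*} [Group G] (μ : G → Q → ℝ) : Prop :=
  (∀ x y q, μ (x * y) q ≥ min (μ x q) (μ y q)) ∧ (∀ x q, μ x⁻¹ q ≥ μ x q)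

/-- The image of an α-Q-fuzzy subgroup under a surjective group homomorphism
is an α-Q-fuzzy subgroup.  The image `f(μ)(x', q)` is the supremum (in ℝ) of
`μ(x, q)` over the fiber `f x = x'`. -/
theorem image_hom_isSubgroup {G G' Q : Type*} [Group G] [Group G'] [Nonempty Q]
    (f : G → G') (hf : Function.Surjective f)
    (hhom : ∀ x y : G, f (x * y) = f x * f y)
    (μ : G → Q → ℝ)
    (h01 : ∀ x q, μ x q ∈ Set.Icc (0 : ℝ) 1)
    (hμ : IsAlphaQFuzzySubgroup μ) :
    IsAlphaQFuzzySubgroup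
      (fun (x' : G') (q : Q) => sSup {v : ℝ | ∃ x : G, f x = x' ∧ v = μ x q}) := by
  have hbdd : ∀ (x' : G') (q : Q),
      BddAbove {v : ℝ | ∃ x : G, f x = x' ∧ v = μ x q} := by
    intro x' q
    exact ⟨1, fun v ⟨x, _, hv⟩ => hv ▸ (h01 x q).2⟩
  have hne : ∀ (x' : G') (q : Q),
      ({v : ℝ | ∃ x : G, f x = x' ∧ v = μ x q}).Nonempty := by
    intro x' q
    obtain ⟨x, hx⟩ := hf x'
    exact ⟨μ x q, x, hx, rfl⟩
  have hone : f 1 = 1 := by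
    have := hhom 1 1
    rw [mul_one] at this
    exact right_eq_mul.mp this
  have hinv : ∀ x : G, f x⁻¹ = (f x)⁻¹ := by
    intro x
    have : f x⁻¹ * f x = 1 := by rw [← hhom, inv_mul_cancel, hone]
    exact eq_inv_of_mul_eq_one_left this
  constructor
  · intro x' y' q
    simp only [ge_iff_le, le_min_iff] at *
    refine le_of_forall_lt fun c hc => ?_
    obtain ⟨hc1, hc2⟩ := lt_min_iff.mp hc
    obtain ⟨a, ⟨x, hx, rfl⟩, hca⟩ := exists_lt_of_lt_csSup (hne x' q) hc1
    obtain ⟨b, ⟨y, hy, rfl⟩, hcb⟩ := exists_lt_of_lt_csSup (hne y' q) hc2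
    have hxy : f (x * y) = x' * y' := by rw [hhom, hx, hy]
    calc c < min (μ x q) (μ y q) := lt_min hca hcb
      _ ≤ μ (x * y) q := hμ.1 x y q
      _ ≤ _ := le_csSup (hbdd (x' * y') q) ⟨x * y, hxy, rfl⟩
  · intro x' q
    refine csSup_le (hne x' q) ?_
    rintro v ⟨x, hx, rfl⟩
    calc μ x q ≤ μ x⁻¹ q := hμ.2 x q
      _ ≤ _ := le_csSup (hbdd x'⁻¹ q) ⟨x⁻¹, by rw [hinv, hx], rfl⟩
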